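/- For every positive integer k there exists a graph G with n = 6k vertices and 9k² + 3 edges (so that e(G) > n²/4) whose booksize is exactly k + 1 = n/6 + 1. Such a graph is obtained from six disjoint sets A₁₁, A₁₂, A₁₃, A₂₁, A₂₂, A₂₃ with |A₁₁| = |A₁₂| = |A₁₃| = k−1 and |A₂₁| = |A₂₂| = |A₂₃| = k+1, joining every vertex of A_{ij} to every vertex of A_{ik} for 1 ≤ j < k ≤ 3 and i = 1, 2, and joining every vertex of A_{1j} to every vertex of A_{2j} for j = 1, 2, 3. -/

import Mathlib

open Finset
open scoped Classical

/-- The booksize of `G`: the maximum over edges `uv` of `G` of the number of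
common neighbors of `u` and `v` (`0` if `G` has no edges). -/
noncomputable def bk {V : Type*} [Fintype V] (G : SimpleGraph V) : ℕ :=
  (Finset.univ.filter fun p : V × V => G.Adj p.1 p.2).sup
    fun p => (G.neighborSet p.1 ∩ G.neighborSet p.2).ncard

/-- The number of `s`-cliques of `G`. -/
noncomputable def cliqueCount {V : Type*} [Fintype V] (G : SimpleGraph V) (s : ℕ) : ℕ :=
  (G.cliqueFinset s).card

/-- The number of induced subgraphs of `G` isomorphic to `H`. -/
noncomputable def inducedCopies {V W : Type*} [Fintype V] (G : SimpleGraph V)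
    (H : SimpleGraph W) : ℕ :=
  {s : Set V | Nonempty (G.induce s ≃g H)}.ncard

/-- `K4j j` is the graph `K₄^(j)`: a triangle on `{0,1,2}` together with the vertex `3`
joined to precisely `3 - j` of its vertices. -/
def K4j (j : ℕ) : SimpleGraph (Fin 4) :=
  SimpleGraph.fromRel fun a b => (a.val < 3 ∧ b.val < 3) ∨ (a.val = 3 ∧ b.val < 3 - j)

/-- The codegree function `d̂`, as a function on unordered pairs. -/
noncomputable def codegSym {V : Type*} [Fintype V] (G : SimpleGraph V) : Sym2 V → ℕ :=
  Sym2.lift ⟨fun u v => (G.neighborSet u ∩ G.neighborSet v).ncard,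
    fun u v => by simp [Set.inter_comm]⟩

/-- `|Γ'(u) ∩ Γ'(v)|`, where `Γ'(x) = V ∖ Γ(x)`, as a function on unordered pairs. -/
noncomputable def noncodegSym {V : Type*} [Fintype V] (G : SimpleGraph V) : Sym2 V → ℕ :=
  Sym2.lift ⟨fun u v => ((G.neighborSet u)ᶜ ∩ (G.neighborSet v)ᶜ).ncard,
    fun u v => by simp [Set.inter_comm]⟩

/-- The Edwards / Khadžiivanov–Nikiforov graph: the class `A_{1j}` is
`{j} × (Fin (k-1)).inl` and `A_{2j}` is `{j} × (Fin (k+1)).inr`; vertices of `A_{ij}` and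
`A_{ik}` are joined for `j ≠ k`, and vertices of `A_{1j}` and `A_{2j}` are joined. -/
def EFG (k : ℕ) : SimpleGraph (Fin 3 × (Fin (k - 1) ⊕ Fin (k + 1))) where
  Adj u v := (u.1 ≠ v.1 ∧ u.2.isLeft = v.2.isLeft) ∨ (u.1 = v.1 ∧ u.2.isLeft ≠ v.2.isLeft)
  symm := by
    constructor
    intro u v h
    rcases h with ⟨h1, h2⟩ | ⟨h1, h2⟩
    · exact Or.inl ⟨h1.symm, h2.symm⟩
    · exact Or.inr ⟨h1.symm, h2.symm⟩
  loopless := by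
    constructor
    intro u h
    rcases h with ⟨h1, _⟩ | ⟨_, h2⟩
    · exact h1 rfl
    · exact h2 rfl

lemma fin3_third {i j c : Fin 3} (hij : i ≠ j) (hci : c ≠ i) (hcj : c ≠ j) : c = -(i+j) := by
  revert hij hci hcj; revert i j c; decide

lemma efg_adj (k : ℕ) (u v : Fin 3 × (Fin (k-1) ⊕ Fin (k+1))) :
    (EFG k).Adj u v ↔ (u.1 ≠ v.1 ∧ u.2.isLeft = v.2.isLeft) ∨ (u.1 = v.1 ∧ u.2.isLeft ≠ v.2.isLeft) :=
  Iff.rfl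

lemma efg_deg_left (k : ℕ) (i : Fin 3) (a : Fin (k-1)) :
    (EFG k).degree (i, Sum.inl a) = 2*(k-1) + (k+1) := by
  classical
  have h : (EFG k).neighborFinset (i, Sum.inl a) =
      ((univ.erase i) ×ˢ (univ.image (Sum.inl : Fin (k-1) → Fin (k-1) ⊕ Fin (k+1)))) ∪
      ({i} ×ˢ (univ.image (Sum.inr : Fin (k+1) → Fin (k-1) ⊕ Fin (k+1)))) := by
    ext ⟨c, z⟩
    rcases z with b | b <;>
      simp [efg_adj, eq_comm, ne_comm]
  have hdisj : Disjoint ((univ.erase i) ×ˢ (univ.image (Sum.inl : Fin (k-1) → Fin (k-1) ⊕ Fin (k+1))))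
      ({i} ×ˢ (univ.image (Sum.inr : Fin (k+1) → Fin (k-1) ⊕ Fin (k+1)))) := by
    rw [Finset.disjoint_left]
    rintro ⟨c, z⟩ h1 h2
    simp at h1 h2
    tauto
  rw [SimpleGraph.degree, h, card_union_of_disjoint hdisj, card_product, card_product,
    card_erase_of_mem (mem_univ i), card_image_of_injective _ Sum.inl_injective,
    card_image_of_injective _ Sum.inr_injective, card_univ, card_univ, card_univ,
    Fintype.card_fin, Fintype.card_fin, Fintype.card_fin, card_singleton]
  ring

lemma efg_deg_right (k : ℕ) (i : Fin 3) (a : Fin (k+1)) :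
    (EFG k).degree (i, Sum.inr a) = 2*(k+1) + (k-1) := by
  classical
  have h : (EFG k).neighborFinset (i, Sum.inr a) =
      ((univ.erase i) ×ˢ (univ.image (Sum.inr : Fin (k+1) → Fin (k-1) ⊕ Fin (k+1)))) ∪
      ({i} ×ˢ (univ.image (Sum.inl : Fin (k-1) → Fin (k-1) ⊕ Fin (k+1)))) := by
    ext ⟨c, z⟩
    rcases z with b | b <;>
      simp [efg_adj, eq_comm, ne_comm]
  have hdisj : Disjoint ((univ.erase i) ×ˢ (univ.image (Sum.inr : Fin (k+1) → Fin (k-1) ⊕ Fin (k+1))))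
      ({i} ×ˢ (univ.image (Sum.inl : Fin (k-1) → Fin (k-1) ⊕ Fin (k+1)))) := by
    rw [Finset.disjoint_left]
    rintro ⟨c, z⟩ h1 h2
    simp at h1 h2
    tauto
  rw [SimpleGraph.degree, h, card_union_of_disjoint hdisj, card_product, card_product,
    card_erase_of_mem (mem_univ i), card_image_of_injective _ Sum.inl_injective,
    card_image_of_injective _ Sum.inr_injective, card_univ, card_univ, card_univ,
    Fintype.card_fin, Fintype.card_fin, Fintype.card_fin, card_singleton]
  ring

lemma efg_edges (k : ℕ) (hk : 1 ≤ k) : (EFG k).edgeFinset.card = 9 * k ^ 2 + 3 := by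
  classical
  obtain ⟨m, rfl⟩ : ∃ m, k = m + 1 := ⟨k - 1, by omega⟩
  have hsum := (EFG (m+1)).sum_degrees_eq_twice_card_edges
  rw [Fintype.sum_prod_type] at hsum
  have h2 : ∀ i : Fin 3, ∑ x : Fin (m+1-1) ⊕ Fin (m+1+1), (EFG (m+1)).degree (i, x)
      = m * (3*m + 2) + (m + 2) * (3*m + 4) := by
    intro i
    rw [Fintype.sum_sum_type,
      Finset.sum_congr rfl (fun x _ => efg_deg_left (m+1) i x),
      Finset.sum_congr rfl (fun x _ => efg_deg_right (m+1) i x),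
      sum_const, sum_const, card_univ, card_univ, Fintype.card_fin, Fintype.card_fin,
      smul_eq_mul, smul_eq_mul]
    simp only [Nat.add_sub_cancel]
    ring
  rw [Finset.sum_congr rfl (fun i _ => h2 i), Finset.sum_const, card_univ, Fintype.card_fin,
    smul_eq_mul] at hsum
  have hx : (m + 1) ^ 2 = m * m + 2 * m + 1 := by ring
  have hy : m * (3*m + 2) = 3 * (m*m) + 2*m := by ring
  have hz : (m + 2) * (3*m + 4) = 3 * (m*m) + 10*m + 8 := by ring
  rw [hy, hz] at hsum
  rw [hx]
  generalize m * m = M at hsum ⊢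
  omega

lemma side_set_eq (k : ℕ) (c : Fin 3) :
    {w : Fin 3 × (Fin (k-1) ⊕ Fin (k+1)) | w.1 = c ∧ w.2.isLeft = false}
      = Set.range (fun b : Fin (k+1) => (c, Sum.inr b)) := by
  ext ⟨c', z⟩
  simp only [Set.mem_setOf_eq, Set.mem_range, Prod.mk.injEq]
  constructor
  · rintro ⟨rfl, hz⟩
    rcases z with b | b
    · simp at hz
    · exact ⟨b, rfl, rfl⟩
  · rintro ⟨b, h1, h2⟩
    subst h1; subst h2; exact ⟨rfl, rfl⟩

lemma side_set_eq' (k : ℕ) (c : Fin 3) :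
    {w : Fin 3 × (Fin (k-1) ⊕ Fin (k+1)) | w.1 = c ∧ w.2.isLeft = true}
      = Set.range (fun b : Fin (k-1) => (c, Sum.inl b)) := by
  ext ⟨c', z⟩
  simp only [Set.mem_setOf_eq, Set.mem_range, Prod.mk.injEq]
  constructor
  · rintro ⟨rfl, hz⟩
    rcases z with b | b
    · exact ⟨b, rfl, rfl⟩
    · simp at hz
  · rintro ⟨b, h1, h2⟩
    subst h1; subst h2; exact ⟨rfl, rfl⟩

lemma ncard_range_pair {α : Type*} {k : ℕ} (f : Fin k → α) (hf : Function.Injective f) :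
    (Set.range f).ncard = k := by
  rw [← Set.image_univ, Set.ncard_image_of_injective _ hf, Set.ncard_univ,
    Nat.card_eq_fintype_card, Fintype.card_fin]

lemma efg_common_subset (k : ℕ) (u v : Fin 3 × (Fin (k-1) ⊕ Fin (k+1)))
    (hij : u.1 ≠ v.1) (hs : u.2.isLeft = v.2.isLeft) :
    (EFG k).neighborSet u ∩ (EFG k).neighborSet v ⊆
      {w | w.1 = -(u.1 + v.1) ∧ w.2.isLeft = u.2.isLeft} := by
  rintro ⟨c, z⟩ ⟨h1, h2⟩
  rw [SimpleGraph.mem_neighborSet, efg_adj] at h1 h2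
  simp only [Set.mem_setOf_eq] at *
  obtain ⟨hc1, hz1⟩ | ⟨hc1, hz1⟩ := h1
  · obtain ⟨hc2, hz2⟩ | ⟨hc2, hz2⟩ := h2
    · exact ⟨fin3_third hij (Ne.symm hc1) (Ne.symm hc2), hz1.symm⟩
    · exact absurd (hs.symm.trans hz1) hz2
  · obtain ⟨hc2, hz2⟩ | ⟨hc2, hz2⟩ := h2
    · exact absurd (hs.trans hz2) hz1
    · exact absurd (hc1.trans hc2.symm) hij

lemma efg_common_empty (k : ℕ) (u v : Fin 3 × (Fin (k-1) ⊕ Fin (k+1)))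
    (hij : u.1 = v.1) (hs : u.2.isLeft ≠ v.2.isLeft) :
    (EFG k).neighborSet u ∩ (EFG k).neighborSet v = ∅ := by
  ext ⟨c, z⟩
  simp only [Set.mem_inter_iff, SimpleGraph.mem_neighborSet, efg_adj, Set.mem_empty_iff_false,
    iff_false]
  rintro ⟨h1, h2⟩
  obtain ⟨hc1, hz1⟩ | ⟨hc1, hz1⟩ := h1 <;> obtain ⟨hc2, hz2⟩ | ⟨hc2, hz2⟩ := h2
  · exact hs (hz1.trans hz2.symm)
  · exact hc1 (hij.trans hc2)
  · exact hc2 (hij.symm.trans hc1)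
  · exact hs (by
      cases hu : u.2.isLeft <;> cases hv : v.2.isLeft <;> cases hzl : z.isLeft <;> simp_all)

theorem stmt11 (k : ℕ) (hk : 1 ≤ k) :
    Fintype.card (Fin 3 × (Fin (k - 1) ⊕ Fin (k + 1))) = 6 * k ∧
    (EFG k).edgeFinset.card = 9 * k ^ 2 + 3 ∧
    (9 * k ^ 2 + 3 : ℝ) > (6 * k : ℝ) ^ 2 / 4 ∧
    bk (EFG k) = k + 1 := by
  refine ⟨?_, efg_edges k hk, ?_, ?_⟩
  · simp only [Fintype.card_prod, Fintype.card_sum, Fintype.card_fin]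
    omega
  · have h : ((6:ℝ) * k) ^ 2 / 4 = 9 * (k:ℝ) ^ 2 := by ring
    rw [h]; linarith
  · have hinjr : ∀ c : Fin 3, Function.Injective
        (fun b : Fin (k+1) => ((c : Fin 3), (Sum.inr b : Fin (k-1) ⊕ Fin (k+1)))) :=
      fun c a b h => Sum.inr_injective (congrArg Prod.snd h)
    have hinjl : ∀ c : Fin 3, Function.Injective
        (fun b : Fin (k-1) => ((c : Fin 3), (Sum.inl b : Fin (k-1) ⊕ Fin (k+1)))) :=
      fun c a b h => Sum.inl_injective (congrArg Prod.snd h)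
    unfold bk
    apply le_antisymm
    · apply Finset.sup_le
      rintro ⟨u, v⟩ hp
      simp only [Finset.mem_filter, Finset.mem_univ, true_and] at hp
      obtain ⟨hij, hs⟩ | ⟨hij, hs⟩ := hp
      · have hsub := efg_common_subset k u v hij hs
        cases hb : u.2.isLeft
        · rw [hb] at hsub
          calc ((EFG k).neighborSet u ∩ (EFG k).neighborSet v).ncard
              ≤ {w : Fin 3 × (Fin (k-1) ⊕ Fin (k+1)) |
                  w.1 = -(u.1 + v.1) ∧ w.2.isLeft = false}.ncard :=
                Set.ncard_le_ncard hsub (Set.toFinite _)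
            _ = k + 1 := by rw [side_set_eq]; exact ncard_range_pair _ (hinjr _)
        · rw [hb] at hsub
          calc ((EFG k).neighborSet u ∩ (EFG k).neighborSet v).ncard
              ≤ {w : Fin 3 × (Fin (k-1) ⊕ Fin (k+1)) |
                  w.1 = -(u.1 + v.1) ∧ w.2.isLeft = true}.ncard :=
                Set.ncard_le_ncard hsub (Set.toFinite _)
            _ = k - 1 := by rw [side_set_eq']; exact ncard_range_pair _ (hinjl _)
            _ ≤ k + 1 := by omega
      · rw [efg_common_empty k u v hij hs]
        simp
    · set u : Fin 3 × (Fin (k-1) ⊕ Fin (k+1)) := (0, Sum.inr ⟨0, Nat.succ_pos k⟩)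
      set v : Fin 3 × (Fin (k-1) ⊕ Fin (k+1)) := (1, Sum.inr ⟨0, Nat.succ_pos k⟩)
      have h01 : u.1 ≠ v.1 := by show (0:Fin 3) ≠ 1; decide
      have hval : -(u.1 + v.1) = (2:Fin 3) := by show -((0:Fin 3) + 1) = 2; decide
      have hadj : (EFG k).Adj u v := Or.inl ⟨h01, rfl⟩
      have hmem : (u, v) ∈ (Finset.univ.filter
          fun p : (Fin 3 × (Fin (k-1) ⊕ Fin (k+1))) ×
            (Fin 3 × (Fin (k-1) ⊕ Fin (k+1))) => (EFG k).Adj p.1 p.2) := by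
        simp [hadj]
      have heq : (EFG k).neighborSet u ∩ (EFG k).neighborSet v
          = {w : Fin 3 × (Fin (k-1) ⊕ Fin (k+1)) |
              w.1 = (2:Fin 3) ∧ w.2.isLeft = false} := by
        apply Set.Subset.antisymm
        · intro w hw
          have h2 := efg_common_subset k u v h01 rfl hw
          rw [hval] at h2
          exact h2
        · rintro ⟨c, z⟩ ⟨hc, hz⟩
          simp only at hc
          subst hc
          have h02 : u.1 ≠ (2:Fin 3) := by show (0:Fin 3) ≠ 2; decide
          have h12 : v.1 ≠ (2:Fin 3) := by show (1:Fin 3) ≠ 2; decide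
          exact ⟨Or.inl ⟨h02, hz.symm⟩, Or.inl ⟨h12, hz.symm⟩⟩
      have hcard : ((EFG k).neighborSet u ∩ (EFG k).neighborSet v).ncard = k + 1 := by
        rw [heq, side_set_eq]
        exact ncard_range_pair _ (hinjr _)
      exact (Finset.le_sup_iff (Nat.succ_pos k)).mpr ⟨(u, v), hmem, le_of_eq hcard.symm⟩
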